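/- For every starting vector v⁽⁰⁾ ∈ ℝ^n, the sequence of iterates v⁽ᵐ⁾ = T(v⁽ᵐ⁻¹⁾) (m ≥ 1) converges (in the sup norm on ℝ^n) to the unique equilibrium value vector v* satisfying T(v*) = v*. -/

import Mathlib

open Finset Filter

/-- The value-update map of the trading network model:
`T_i(v) = -c_i + max{ max_{j ∈ N(i)} (π_{ij} v_i + (1-π_{ij}) v_j), u_i }`. -/
noncomputable def T {n : ℕ} (N : Fin n → Finset (Fin n)) (hN : ∀ i, (N i).Nonempty)
    (c u : Fin n → ℝ) (π : Fin n → Fin n → ℝ) (v : Fin n → ℝ) (i : Fin n) : ℝ :=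
  -c i + max ((N i).sup' (hN i) fun j => π i j * v i + (1 - π i j) * v j) (u i)

section Aux

variable {n : ℕ} (N : Fin n → Finset (Fin n)) (hN : ∀ i, (N i).Nonempty)
    (c u : Fin n → ℝ) (π : Fin n → Fin n → ℝ)

lemma T_mono (hπ : ∀ i j, π i j ∈ Set.Ioo (0 : ℝ) 1) {v w : Fin n → ℝ}
    (hvw : ∀ i, v i ≤ w i) : ∀ i, T N hN c u π v i ≤ T N hN c u π w i := by
  intro i
  unfold T
  apply add_le_add le_rfl
  apply max_le_max _ le_rfl
  apply Finset.sup'_le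
  intro j hj
  have h1 := (hπ i j).1
  have h2 := (hπ i j).2
  have h3 := hvw i
  have h4 := hvw j
  have h5 := Finset.le_sup' (fun j => π i j * w i + (1 - π i j) * w j) hj
  nlinarith [h5]

lemma T_lb (v : Fin n → ℝ) (i : Fin n) : u i - c i ≤ T N hN c u π v i := by
  unfold T
  have := le_max_right ((N i).sup' (hN i) fun j => π i j * v i + (1 - π i j) * v j) (u i)
  linarith

lemma iter_mono (hπ : ∀ i j, π i j ∈ Set.Ioo (0 : ℝ) 1) {v w : Fin n → ℝ}
    (hvw : ∀ i, v i ≤ w i) : ∀ m i, (T N hN c u π)^[m] v i ≤ (T N hN c u π)^[m] w i := by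
  intro m
  induction m with
  | zero => simpa using hvw
  | succ m ih =>
      intro i
      rw [Function.iterate_succ_apply', Function.iterate_succ_apply']
      exact T_mono N hN c u π hπ ih i

lemma T_shift_le (hπ : ∀ i j, π i j ∈ Set.Ioo (0 : ℝ) 1) (v : Fin n → ℝ) {t : ℝ}
    (ht : 0 ≤ t) (i : Fin n) : T N hN c u π (fun k => v k + t) i ≤ T N hN c u π v i + t := by
  unfold T
  have hA : ((N i).sup' (hN i) fun j => π i j * (v i + t) + (1 - π i j) * (v j + t)) ≤
      ((N i).sup' (hN i) fun j => π i j * v i + (1 - π i j) * v j) + t := by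
    apply Finset.sup'_le
    intro j hj
    have := Finset.le_sup' (fun j => π i j * v i + (1 - π i j) * v j) hj
    nlinarith [this]
  have h1 := le_max_left ((N i).sup' (hN i) fun j => π i j * v i + (1 - π i j) * v j) (u i)
  have h2 := le_max_right ((N i).sup' (hN i) fun j => π i j * v i + (1 - π i j) * v j) (u i)
  have : max ((N i).sup' (hN i) fun j => π i j * (v i + t) + (1 - π i j) * (v j + t)) (u i) ≤
      max ((N i).sup' (hN i) fun j => π i j * v i + (1 - π i j) * v j) (u i) + t :=
    max_le (by linarith) (by linarith)
  linarith

lemma T_shift_ge (hπ : ∀ i j, π i j ∈ Set.Ioo (0 : ℝ) 1) (v : Fin n → ℝ) {t : ℝ}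
    (ht : 0 ≤ t) (i : Fin n) : T N hN c u π v i - t ≤ T N hN c u π (fun k => v k - t) i := by
  unfold T
  have hA : ((N i).sup' (hN i) fun j => π i j * v i + (1 - π i j) * v j) - t ≤
      ((N i).sup' (hN i) fun j => π i j * (v i - t) + (1 - π i j) * (v j - t)) := by
    obtain ⟨j, hj, hje⟩ := Finset.exists_mem_eq_sup' (hN i)
      (fun j => π i j * v i + (1 - π i j) * v j)
    rw [hje]
    have := Finset.le_sup' (fun j => π i j * (v i - t) + (1 - π i j) * (v j - t)) hj
    nlinarith [this]
  have h1 := le_max_left ((N i).sup' (hN i) fun j => π i j * (v i - t) + (1 - π i j) * (v j - t)) (u i)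
  have h2 := le_max_right ((N i).sup' (hN i) fun j => π i j * (v i - t) + (1 - π i j) * (v j - t)) (u i)
  have : max ((N i).sup' (hN i) fun j => π i j * v i + (1 - π i j) * v j) (u i) - t ≤
      max ((N i).sup' (hN i) fun j => π i j * (v i - t) + (1 - π i j) * (v j - t)) (u i) := by
    have : max ((N i).sup' (hN i) fun j => π i j * v i + (1 - π i j) * v j) (u i) ≤
        max ((N i).sup' (hN i) fun j => π i j * (v i - t) + (1 - π i j) * (v j - t)) (u i) + t :=
      max_le (by linarith) (by linarith)
    linarith
  linarith

lemma T_cont : Continuous (T N hN c u π) := by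
  apply continuous_pi
  intro i
  apply Continuous.add continuous_const
  apply Continuous.max _ continuous_const
  apply Continuous.finset_sup'_apply (hN i)
  intro j _
  exact (continuous_const.mul (continuous_apply i)).add (continuous_const.mul (continuous_apply j))

/-- key uniqueness half: any two fixed points are comparable. -/
lemma fixed_le (hc : ∀ i, 0 < c i) (hπ : ∀ i j, π i j ∈ Set.Ioo (0 : ℝ) 1)
    {v w : Fin n → ℝ} (hv : T N hN c u π v = v) (hw : T N hN c u π w = w) :
    ∀ i, v i ≤ w i := by
  by_contra hcon
  push_neg at hcon
  obtain ⟨i0, hi0⟩ := hcon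
  have hne : (Finset.univ : Finset (Fin n)).Nonempty := ⟨i0, Finset.mem_univ i0⟩
  set δ := Finset.univ.sup' hne (fun i => v i - w i) with hδ
  have hδle : ∀ i, v i - w i ≤ δ := by
    intro i
    rw [hδ]
    exact Finset.le_sup' (fun i => v i - w i) (Finset.mem_univ i)
  have hδpos : 0 < δ := by
    have := hδle i0
    have h2 : v i0 - w i0 ≤ δ := this
    have h3 : (fun i => v i - w i) i0 ≤ δ := by
      rw [hδ]; exact Finset.le_sup' (fun i => v i - w i) (Finset.mem_univ i0)
    simp only at h3
    linarith
  -- chain step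
  have key : ∀ i, v i - w i = δ → ∃ j, (v j - w j = δ) ∧ v i < v j := by
    intro i hi
    have hvi : v i = T N hN c u π v i := (congrFun hv i).symm
    have hwi : w i = T N hN c u π w i := (congrFun hw i).symm
    set Av := (N i).sup' (hN i) (fun j => π i j * v i + (1 - π i j) * v j) with hAv
    set Aw := (N i).sup' (hN i) (fun j => π i j * w i + (1 - π i j) * w j) with hAw
    have hvi' : v i = -c i + max Av (u i) := hvi
    have hwi' : w i = -c i + max Aw (u i) := hwi
    have hmax : max Av (u i) - max Aw (u i) = δ := by
      have : v i - w i = max Av (u i) - max Aw (u i) := by rw [hvi', hwi']; ring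
      linarith [hi, this]
    have hAvu : max Av (u i) = Av := by
      rcases max_cases Av (u i) with ⟨h1, _⟩ | ⟨h1, h2⟩
      · exact h1
      · exfalso
        have : u i ≤ max Aw (u i) := le_max_right _ _
        linarith [hmax, h1]
    have hAdiff : δ ≤ Av - Aw := by
      have : Aw ≤ max Aw (u i) := le_max_left _ _
      linarith [hmax, hAvu]
    obtain ⟨j, hj, hje⟩ := Finset.exists_mem_eq_sup' (hN i)
      (fun j => π i j * v i + (1 - π i j) * v j)
    have hAvj : Av = π i j * v i + (1 - π i j) * v j := hje
    have hAwj : π i j * w i + (1 - π i j) * w j ≤ Aw :=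
      Finset.le_sup' (fun j => π i j * w i + (1 - π i j) * w j) hj
    have h1 := (hπ i j).1
    have h2 := (hπ i j).2
    have hdj : δ ≤ v j - w j := by nlinarith [hδle i, hi]
    have hdjδ : v j - w j = δ := le_antisymm (hδle j) hdj
    refine ⟨j, hdjδ, ?_⟩
    -- v i = -c i + Av = -c i + π v i + (1-π) v j
    have heq : v i = -c i + Av := by rw [hvi', hAvu]
    rw [hAvj] at heq
    by_contra hcontra
    push_neg at hcontra
    nlinarith [hc i, heq, hcontra, h2]
  -- build infinite strictly increasing chain
  have hstep : ∀ p : {i : Fin n // v i - w i = δ}, ∃ q : {i : Fin n // v i - w i = δ},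
      v p.1 < v q.1 := by
    rintro ⟨i, hi⟩
    obtain ⟨j, hj1, hj2⟩ := key i hi
    exact ⟨⟨j, hj1⟩, hj2⟩
  choose f hf using hstep
  obtain ⟨i1, _, hi1⟩ := Finset.exists_mem_eq_sup' hne (fun i => v i - w i)
  have hi1δ : v i1 - w i1 = δ := by rw [hδ, hi1]
  let g : ℕ → {i : Fin n // v i - w i = δ} := fun k => Nat.rec ⟨i1, hi1δ⟩ (fun _ p => f p) k
  have hsm : StrictMono (fun k => v (g k).1) := strictMono_nat_of_lt_succ (fun k => hf (g k))
  obtain ⟨a, b, hab, heq⟩ := Finite.exists_ne_map_eq_of_infinite (fun k => (g k).1)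
  exact hab (hsm.injective (by simp only [heq]))

lemma conv_of_le (hπ : ∀ i j, π i j ∈ Set.Ioo (0 : ℝ) 1) {w : Fin n → ℝ}
    (hw : ∀ i, T N hN c u π w i ≤ w i) :
    ∃ p : Fin n → ℝ, T N hN c u π p = p ∧
      Tendsto (fun m => (T N hN c u π)^[m] w) atTop (nhds p) := by
  set F := T N hN c u π with hF
  have hdec : ∀ m i, F^[m + 1] w i ≤ F^[m] w i := by
    intro m
    induction m with
    | zero => simpa using hw
    | succ m ih =>
        intro i
        rw [Function.iterate_succ_apply', Function.iterate_succ_apply']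
        exact T_mono N hN c u π hπ (fun k => by
          have h := ih k
          rwa [Function.iterate_succ_apply'] at h) i
  have hanti : ∀ i, Antitone (fun m => F^[m] w i) := by
    intro i
    exact antitone_nat_of_succ_le (fun m => hdec m i)
  have hlb : ∀ m i, min (w i) (u i - c i) ≤ F^[m] w i := by
    intro m i
    cases m with
    | zero => simpa using min_le_left _ _
    | succ m =>
        rw [Function.iterate_succ_apply']
        exact le_trans (min_le_right _ _) (T_lb N hN c u π _ i)
  set p : Fin n → ℝ := fun i => ⨅ m, F^[m] w i with hp
  have hti : ∀ i, Tendsto (fun m => F^[m] w i) atTop (nhds (p i)) := by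
    intro i
    exact tendsto_atTop_ciInf (hanti i)
      ⟨min (w i) (u i - c i), by rintro x ⟨m, rfl⟩; exact hlb m i⟩
  have htend : Tendsto (fun m => F^[m] w) atTop (nhds p) := tendsto_pi_nhds.2 hti
  refine ⟨p, ?_, htend⟩
  have h1 : Tendsto (fun m => F^[m + 1] w) atTop (nhds p) :=
    htend.comp (tendsto_add_atTop_nat 1)
  have h1' : Tendsto (fun m => F (F^[m] w)) atTop (nhds p) := by
    simpa only [Function.iterate_succ_apply'] using h1
  have h2 : Tendsto (fun m => F (F^[m] w)) atTop (nhds (F p)) :=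
    ((T_cont N hN c u π).tendsto p).comp htend
  exact tendsto_nhds_unique h2 h1'

lemma conv_of_ge (hπ : ∀ i j, π i j ∈ Set.Ioo (0 : ℝ) 1) {w B : Fin n → ℝ}
    (hw : ∀ i, w i ≤ T N hN c u π w i) (hB : T N hN c u π B = B) (hwB : ∀ i, w i ≤ B i) :
    ∃ p : Fin n → ℝ, T N hN c u π p = p ∧
      Tendsto (fun m => (T N hN c u π)^[m] w) atTop (nhds p) := by
  set F := T N hN c u π with hF
  have hinc : ∀ m i, F^[m] w i ≤ F^[m + 1] w i := by
    intro m
    induction m with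
    | zero => simpa using hw
    | succ m ih =>
        intro i
        rw [Function.iterate_succ_apply', Function.iterate_succ_apply']
        exact T_mono N hN c u π hπ (fun k => by
          have h := ih k
          first
            | exact h
            | rwa [Function.iterate_succ_apply'] at h
            | rwa [← Function.iterate_succ_apply'] at h) i
  have hmono : ∀ i, Monotone (fun m => F^[m] w i) := by
    intro i
    exact monotone_nat_of_le_succ (fun m => hinc m i)
  have hub : ∀ m i, F^[m] w i ≤ B i := by
    intro m i
    have := iter_mono N hN c u π hπ hwB m i
    rwa [Function.iterate_fixed hB m] at this
  set p : Fin n → ℝ := fun i => ⨆ m, F^[m] w i with hp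
  have hti : ∀ i, Tendsto (fun m => F^[m] w i) atTop (nhds (p i)) := by
    intro i
    exact tendsto_atTop_ciSup (hmono i) ⟨B i, by rintro x ⟨m, rfl⟩; exact hub m i⟩
  have htend : Tendsto (fun m => F^[m] w) atTop (nhds p) := tendsto_pi_nhds.2 hti
  refine ⟨p, ?_, htend⟩
  have h1 : Tendsto (fun m => F^[m + 1] w) atTop (nhds p) :=
    htend.comp (tendsto_add_atTop_nat 1)
  have h1' : Tendsto (fun m => F (F^[m] w)) atTop (nhds p) := by
    simpa only [Function.iterate_succ_apply'] using h1
  have h2 : Tendsto (fun m => F (F^[m] w)) atTop (nhds (F p)) :=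
    ((T_cont N hN c u π).tendsto p).comp htend
  exact tendsto_nhds_unique h2 h1'

end Aux

theorem iterates_converge_to_unique_equilibrium {n : ℕ} (hn : 1 ≤ n)
    (N : Fin n → Finset (Fin n)) (hN : ∀ i, (N i).Nonempty)
    (c u : Fin n → ℝ) (π : Fin n → Fin n → ℝ)
    (hc : ∀ i, 0 < c i) (hπ : ∀ i j, π i j ∈ Set.Ioo (0 : ℝ) 1) :
    ∃ vstar : Fin n → ℝ, T N hN c u π vstar = vstar ∧
      (∀ w : Fin n → ℝ, T N hN c u π w = w → w = vstar) ∧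
      ∀ v0 : Fin n → ℝ,
        Tendsto (fun m => (T N hN c u π)^[m] v0) atTop (nhds vstar) := by
  have hne : (Finset.univ : Finset (Fin n)).Nonempty := by
    have : 0 < n := hn
    exact ⟨⟨0, this⟩, Finset.mem_univ _⟩
  set F := T N hN c u π with hF
  -- a starting point above everything that decreases
  set M : ℝ := Finset.univ.sup' hne u with hM
  have hw0 : ∀ i, F (fun _ => M) i ≤ (fun _ => M) i := by
    intro i
    show -c i + max _ _ ≤ M
    have hsup : ((N i).sup' (hN i) fun j => π i j * M + (1 - π i j) * M) ≤ M := by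
      apply Finset.sup'_le
      intro j _
      nlinarith [(hπ i j).1, (hπ i j).2]
    have hu : u i ≤ M := by
      rw [hM]; exact Finset.le_sup' u (Finset.mem_univ i)
    have := hc i
    have hmax : max ((N i).sup' (hN i) fun j => π i j * M + (1 - π i j) * M) (u i) ≤ M :=
      max_le hsup hu
    linarith
  obtain ⟨vstar, hfix, _⟩ := conv_of_le N hN c u π hπ hw0
  have huniq : ∀ w : Fin n → ℝ, F w = w → w = vstar := by
    intro w hwfix
    funext i
    exact le_antisymm (fixed_le N hN c u π hc hπ hwfix hfix i)
      (fixed_le N hN c u π hc hπ hfix hwfix i)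
  refine ⟨vstar, hfix, huniq, ?_⟩
  intro v0
  set t : ℝ := Finset.univ.sup' hne (fun i => |v0 i - vstar i|) with hT
  have htabs : ∀ i, |v0 i - vstar i| ≤ t := by
    intro i
    rw [hT]; exact Finset.le_sup' (fun i => |v0 i - vstar i|) (Finset.mem_univ i)
  have ht0 : 0 ≤ t := le_trans (abs_nonneg _) (htabs ⟨0, hn⟩)
  -- upper comparison sequence
  have hup : ∀ i, F (fun k => vstar k + t) i ≤ (fun k => vstar k + t) i := by
    intro i
    have h1 := T_shift_le N hN c u π hπ vstar ht0 i
    have h2 : T N hN c u π vstar i = vstar i := congrFun hfix i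
    show T N hN c u π (fun k => vstar k + t) i ≤ vstar i + t
    linarith
  obtain ⟨pU, hpU, htU⟩ := conv_of_le N hN c u π hπ hup
  have hpUe : pU = vstar := huniq pU hpU
  -- lower comparison sequence
  have hlow : ∀ i, (fun k => vstar k - t) i ≤ F (fun k => vstar k - t) i := by
    intro i
    have h1 := T_shift_ge N hN c u π hπ vstar ht0 i
    have h2 : T N hN c u π vstar i = vstar i := congrFun hfix i
    show vstar i - t ≤ T N hN c u π (fun k => vstar k - t) i
    linarith
  have hwB : ∀ i, (fun k => vstar k - t) i ≤ vstar i := fun i => by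
    show vstar i - t ≤ vstar i
    linarith
  obtain ⟨pL, hpL, htL⟩ := conv_of_ge N hN c u π hπ hlow hfix hwB
  have hpLe : pL = vstar := huniq pL hpL
  rw [hpUe] at htU
  rw [hpLe] at htL
  -- squeeze componentwise
  apply tendsto_pi_nhds.2
  intro i
  have hL : ∀ m, F^[m] (fun k => vstar k - t) i ≤ F^[m] v0 i := by
    intro m
    apply iter_mono N hN c u π hπ _ m i
    intro k
    have h := abs_le.1 (htabs k)
    show vstar k - t ≤ v0 k
    linarith [h.1]
  have hU : ∀ m, F^[m] v0 i ≤ F^[m] (fun k => vstar k + t) i := by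
    intro m
    apply iter_mono N hN c u π hπ _ m i
    intro k
    have h := abs_le.1 (htabs k)
    show v0 k ≤ vstar k + t
    linarith [h.2]
  have htLi : Tendsto (fun m => F^[m] (fun k => vstar k - t) i) atTop (nhds (vstar i)) :=
    (continuous_apply i).continuousAt.tendsto.comp htL
  have htUi : Tendsto (fun m => F^[m] (fun k => vstar k + t) i) atTop (nhds (vstar i)) :=
    (continuous_apply i).continuousAt.tendsto.comp htU
  exact tendsto_of_tendsto_of_tendsto_of_le_of_le htLi htUi hL hU
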